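/- Let 𝓘 be a finite family of integer intervals, let M ⊆ ℤ be a finite minimal hitting set for 𝓘, and let y : ℤ → ℝ be nonnegative with finite support such that ∑_{i ∈ I} y(i) ≥ 1 for every I ∈ 𝓘. Then |M| ≤ 2 ∑_{i ∈ ℤ} y(i). -/

import Mathlib

/- **Statement 4.** A minimal hitting set for a finite family of (nonempty)
integer intervals has size at most twice the value of any nonnegative
fractional hitting set. -/
theorem stmt_4 (𝓘 : Finset (Finset ℤ))
    (hI : ∀ I ∈ 𝓘, ∃ a b : ℤ, a ≤ b ∧ I = Finset.Icc a b)
    (M : Finset ℤ)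
    (hhit : ∀ I ∈ 𝓘, (M ∩ I).Nonempty)
    (hmin : ∀ M' : Finset ℤ, M' ⊂ M → ¬ (∀ I ∈ 𝓘, (M' ∩ I).Nonempty))
    (y : ℤ → ℝ) (hy : ∀ i, 0 ≤ y i) (hfin : (Function.support y).Finite)
    (hcov : ∀ I ∈ 𝓘, 1 ≤ ∑ i ∈ I, y i) :
    (M.card : ℝ) ≤ 2 * ∑ᶠ i : ℤ, y i := by
  classical
  -- private intervals
  have hpriv : ∀ m : ℤ, ∃ I : Finset ℤ, m ∈ M → I ∈ 𝓘 ∧ M ∩ I = {m} := by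
    intro m
    by_cases hm : m ∈ M
    · have hss : M.erase m ⊂ M := Finset.erase_ssubset hm
      have := hmin _ hss
      push_neg at this
      obtain ⟨I, hI𝓘, hempty⟩ := this
      refine ⟨I, fun _ => ⟨hI𝓘, ?_⟩⟩
      have hne : (M ∩ I).Nonempty := hhit I hI𝓘
      have hall : ∀ x ∈ M ∩ I, x = m := by
        intro x hx
        by_contra hxm
        exact Finset.not_nonempty_iff_eq_empty.mpr hempty ⟨x, Finset.mem_inter.mpr
          ⟨Finset.mem_erase.mpr ⟨hxm, (Finset.mem_inter.mp hx).1⟩,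
           (Finset.mem_inter.mp hx).2⟩⟩
      apply Finset.eq_singleton_iff_unique_mem.mpr
      obtain ⟨x, hx⟩ := hne
      exact ⟨(hall x hx) ▸ hx, hall⟩
    · exact ⟨∅, fun h => absurd h hm⟩
  choose f hf using hpriv
  -- key sandwich lemma
  have hsand : ∀ m ∈ M, ∀ m' ∈ M, m < m' → ∀ i : ℤ,
      i ∈ f m → i ∈ f m' → m < i ∧ i < m' := by
    intro m hm m' hm' hlt i hi hi'
    obtain ⟨hIm, hsing⟩ := hf m hm
    obtain ⟨hIm', hsing'⟩ := hf m' hm'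
    have hmem : m ∈ f m := by
      have : m ∈ M ∩ f m := hsing ▸ Finset.mem_singleton_self m
      exact (Finset.mem_inter.mp this).2
    have hmem' : m' ∈ f m' := by
      have : m' ∈ M ∩ f m' := hsing' ▸ Finset.mem_singleton_self m'
      exact (Finset.mem_inter.mp this).2
    have hnot : m' ∉ f m := by
      intro h
      have : m' ∈ M ∩ f m := Finset.mem_inter.mpr ⟨hm', h⟩
      rw [hsing, Finset.mem_singleton] at this
      omega
    have hnot' : m ∉ f m' := by
      intro h
      have : m ∈ M ∩ f m' := Finset.mem_inter.mpr ⟨hm, h⟩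
      rw [hsing', Finset.mem_singleton] at this
      omega
    obtain ⟨a, b, -, hab⟩ := hI _ hIm
    obtain ⟨a', b', -, hab'⟩ := hI _ hIm'
    rw [hab, Finset.mem_Icc] at hmem hi hnot
    rw [hab', Finset.mem_Icc] at hmem' hi' hnot'
    omega
  -- each point is in at most two private intervals
  have hcard : ∀ i : ℤ, (M.filter fun m => i ∈ f m).card ≤ 2 := by
    intro i
    by_contra h
    push_neg at h
    obtain ⟨a, b, c, ha, hb, hc, hab, hac, hbc⟩ := Finset.two_lt_card_iff.mp h
    simp only [Finset.mem_filter] at ha hb hc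
    have key : ∀ u v : ℤ, u ∈ M ∧ i ∈ f u → v ∈ M ∧ i ∈ f v → u < v →
        u < i ∧ i < v := fun u v hu hv huv => hsand u hu.1 v hv.1 huv i hu.2 hv.2
    rcases Ne.lt_or_gt hab with h1 | h1 <;> rcases Ne.lt_or_gt hac with h2 | h2 <;>
      rcases Ne.lt_or_gt hbc with h3 | h3
    · obtain ⟨p1, p2⟩ := key a b ha hb h1; obtain ⟨p3, p4⟩ := key b c hb hc h3; omega
    · obtain ⟨p1, p2⟩ := key a c ha hc h2; obtain ⟨p3, p4⟩ := key c b hc hb h3; omega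
    · omega
    · obtain ⟨p1, p2⟩ := key c a hc ha h2; obtain ⟨p3, p4⟩ := key a b ha hb h1; omega
    · obtain ⟨p1, p2⟩ := key b a hb ha h1; obtain ⟨p3, p4⟩ := key a c ha hc h2; omega
    · omega
    · obtain ⟨p1, p2⟩ := key b c hb hc h3; obtain ⟨p3, p4⟩ := key c a hc ha h2; omega
    · obtain ⟨p1, p2⟩ := key c b hc hb h3; obtain ⟨p3, p4⟩ := key b a hb ha h1; omega
  -- union of all intervals
  set T : Finset ℤ := 𝓘.sup id with hT
  have hsub : ∀ m ∈ M, f m ⊆ T := fun m hm => Finset.le_sup (f := id) (hf m hm).1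
  have step1 : (M.card : ℝ) ≤ ∑ m ∈ M, ∑ i ∈ f m, y i := by
    calc (M.card : ℝ) = ∑ m ∈ M, (1 : ℝ) := by simp
    _ ≤ ∑ m ∈ M, ∑ i ∈ f m, y i :=
        Finset.sum_le_sum fun m hm => hcov _ (hf m hm).1
  have step2 : ∑ m ∈ M, ∑ i ∈ f m, y i ≤ 2 * ∑ i ∈ T, y i := by
    calc ∑ m ∈ M, ∑ i ∈ f m, y i
        = ∑ m ∈ M, ∑ i ∈ T, if i ∈ f m then y i else 0 := by
          refine Finset.sum_congr rfl fun m hm => ?_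
          rw [Finset.sum_ite_mem, Finset.inter_eq_right.mpr (hsub m hm)]
      _ = ∑ i ∈ T, ∑ m ∈ M, if i ∈ f m then y i else 0 := Finset.sum_comm
      _ = ∑ i ∈ T, ((M.filter fun m => i ∈ f m).card : ℝ) * y i := by
          refine Finset.sum_congr rfl fun i _ => ?_
          rw [Finset.sum_ite, Finset.sum_const, Finset.sum_const_zero, add_zero,
            nsmul_eq_mul]
      _ ≤ ∑ i ∈ T, 2 * y i := Finset.sum_le_sum fun i _ =>
          mul_le_mul_of_nonneg_right (by exact_mod_cast hcard i) (hy i)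
      _ = 2 * ∑ i ∈ T, y i := by rw [Finset.mul_sum]
  have step3 : ∑ i ∈ T, y i ≤ ∑ᶠ i : ℤ, y i := by
    rw [finsum_eq_sum y hfin]
    calc ∑ i ∈ T, y i ≤ ∑ i ∈ T ∪ hfin.toFinset, y i :=
          Finset.sum_le_sum_of_subset_of_nonneg Finset.subset_union_left
            (fun i _ _ => hy i)
      _ = ∑ i ∈ hfin.toFinset, y i := by
          refine (Finset.sum_subset Finset.subset_union_right ?_).symm
          intro i _ hi
          simpa using hi
  linarith
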